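/- Let S ⊆ ℝⁿ be an open convex set, let f : ℝⁿ → ℝ be differentiable and convex on S, and let g : ℝⁿ → ℝ be an affine function that is strictly positive on S. Then the ratio z(x) = f(x)/g(x) is pseudoconvex on S, i.e., for all x, x' ∈ S, ⟨∇z(x), x' − x⟩ ≥ 0 implies z(x') ≥ z(x). -/

import Mathlib

/-- Gradient inequality for a convex differentiable function on an open convex set. -/
lemma grad_ineq (n : ℕ) (S : Set (Fin n → ℝ)) (hSopen : IsOpen S) (hSconv : Convex ℝ S)
    (f : (Fin n → ℝ) → ℝ) (hfconv : ConvexOn ℝ S f)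
    (x : Fin n → ℝ) (hx : x ∈ S) (x' : Fin n → ℝ) (hx' : x' ∈ S)
    (f' : (Fin n → ℝ) →L[ℝ] ℝ) (hf' : HasFDerivAt f f' x) :
    f' (x' - x) ≤ f x' - f x := by
  set c : ℝ → (Fin n → ℝ) := fun t => x + t • (x' - x) with hc
  have hcd : HasDerivAt c (x' - x) 0 := by
    have h1 : HasDerivAt (fun t : ℝ => t • (x' - x)) ((1 : ℝ) • (x' - x)) 0 :=
      (hasDerivAt_id (0 : ℝ)).smul_const (x' - x)
    have h2 := h1.const_add x
    rw [one_smul] at h2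
    exact h2
  have hφd : HasDerivAt (f ∘ c) (f' (x' - x)) 0 := by
    have hc0 : c 0 = x := by simp [hc]
    have h := HasFDerivAt.comp_hasDerivAt (x := (0:ℝ)) (hc0 ▸ hf') hcd
    simpa using h
  have hmem : ∀ t ∈ Set.Icc (0 : ℝ) 1, c t ∈ S := fun t ht =>
    hSconv.add_smul_sub_mem hx hx' ht
  have hφconv : ConvexOn ℝ (Set.Icc (0 : ℝ) 1) (f ∘ c) := by
    have hcomp : ConvexOn ℝ ((AffineMap.lineMap x x' : ℝ →ᵃ[ℝ] (Fin n → ℝ)) ⁻¹' S)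
        (f ∘ (AffineMap.lineMap x x' : ℝ →ᵃ[ℝ] (Fin n → ℝ))) :=
      hfconv.comp_affineMap _
    have heq : (f ∘ (AffineMap.lineMap x x' : ℝ →ᵃ[ℝ] (Fin n → ℝ))) = f ∘ c := by
      funext t
      simp [Function.comp, hc, AffineMap.lineMap_apply_module', add_comm]
    rw [heq] at hcomp
    refine hcomp.subset ?_ (convex_Icc 0 1)
    intro t ht
    have : (AffineMap.lineMap x x' : ℝ →ᵃ[ℝ] (Fin n → ℝ)) t = c t := by
      simp [hc, AffineMap.lineMap_apply_module', add_comm]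
    simpa [Set.mem_preimage, this] using hmem t ht
  have hslope := hφconv.le_slope_of_hasDerivAt (Set.left_mem_Icc.2 zero_le_one)
    (Set.right_mem_Icc.2 zero_le_one) zero_lt_one hφd
  have h0 : (f ∘ c) 0 = f x := by simp [hc]
  have h1 : (f ∘ c) 1 = f x' := by simp [hc]
  rw [slope_def_field] at hslope
  simp only [h0, h1] at hslope
  linarith [hslope]

/-- Theorem (Cambini & Martein): if `f` is differentiable and convex on an open convex
set `S`, and `g` is affine and strictly positive on `S`, then `z = f / g` is
pseudoconvex on `S`: for all `x, x' ∈ S`, `⟨∇z(x), x' - x⟩ ≥ 0` implies `z(x') ≥ z(x)`. -/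
theorem stmt_0 (n : ℕ) (S : Set (Fin n → ℝ)) (hSopen : IsOpen S) (hSconv : Convex ℝ S)
    (f g : (Fin n → ℝ) → ℝ)
    (hfdiff : DifferentiableOn ℝ f S) (hfconv : ConvexOn ℝ S f)
    (L : (Fin n → ℝ) →L[ℝ] ℝ) (c : ℝ) (hgaff : ∀ x, g x = L x + c)
    (hgpos : ∀ x ∈ S, 0 < g x) :
    ∀ x ∈ S, ∀ x' ∈ S,
      0 ≤ fderiv ℝ (fun y => f y / g y) x (x' - x) → f x / g x ≤ f x' / g x' := by
  intro x hx x' hx' hderiv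
  have hgx : 0 < g x := hgpos x hx
  have hgx' : 0 < g x' := hgpos x' hx'
  have hfx : DifferentiableAt ℝ f x := (hfdiff x hx).differentiableAt (hSopen.mem_nhds hx)
  set f' : (Fin n → ℝ) →L[ℝ] ℝ := fderiv ℝ f x with hf'def
  have hf' : HasFDerivAt f f' x := hfx.hasFDerivAt
  have hgd : HasFDerivAt g L x := by
    have : HasFDerivAt (fun y => L y + c) L x := (L.hasFDerivAt).add_const c
    exact this.congr_of_eventuallyEq (Filter.Eventually.of_forall fun y => (hgaff y))
  set v : Fin n → ℝ := x' - x with hv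
  -- the line through x in direction v
  set cl : ℝ → (Fin n → ℝ) := fun t => x + t • v with hcl
  have hcld : HasDerivAt cl v 0 := by
    have h1 : HasDerivAt (fun t : ℝ => t • v) ((1 : ℝ) • v) 0 :=
      (hasDerivAt_id (0 : ℝ)).smul_const v
    have h2 := h1.const_add x
    rw [one_smul] at h2
    exact h2
  have hcl0 : cl 0 = x := by simp [hcl]
  -- z is differentiable at x
  have hz : DifferentiableAt ℝ (fun y => f y / g y) x := by
    simp only [div_eq_mul_inv]
    exact hfx.mul (hgd.differentiableAt.inv hgx.ne')
  -- derivative of z ∘ cl at 0, two ways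
  have hψ1 : HasDerivAt ((fun y => f y / g y) ∘ cl)
      (fderiv ℝ (fun y => f y / g y) x v) 0 := by
    have h := HasFDerivAt.comp_hasDerivAt (x := (0:ℝ)) (hcl0 ▸ hz.hasFDerivAt) hcld
    simp only [hcl0] at h
    simpa using h
  have hφ : HasDerivAt (f ∘ cl) (f' v) 0 := by
    have h := HasFDerivAt.comp_hasDerivAt (x := (0:ℝ)) (hcl0 ▸ hf') hcld
    simpa using h
  have hχ : HasDerivAt (g ∘ cl) (L v) 0 := by
    have h := HasFDerivAt.comp_hasDerivAt (x := (0:ℝ)) (hcl0 ▸ hgd) hcld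
    simpa using h
  have hgcl0 : g (cl 0) ≠ 0 := by rw [hcl0]; exact hgx.ne'
  have hψ2 : HasDerivAt (fun t => f (cl t) / g (cl t))
      ((f' v * g (cl 0) - f (cl 0) * L v) / (g (cl 0)) ^ 2) 0 :=
    hφ.div hχ hgcl0
  have huniq : fderiv ℝ (fun y => f y / g y) x v
      = (f' v * g x - f x * L v) / (g x) ^ 2 := by
    have := hψ1.unique hψ2
    rwa [hcl0] at this
  -- from the hypothesis: f x * L v ≤ g x * f' v
  rw [huniq] at hderiv
  have hkey : f x * L v ≤ g x * f' v := by
    have hsq : 0 < (g x) ^ 2 := by positivity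
    have h := (le_div_iff₀ hsq).mp hderiv
    linarith
  -- gradient inequality
  have hgi : f' v ≤ f x' - f x :=
    grad_ineq n S hSopen hSconv f hfconv x hx x' hx' f' hf'
  -- g x' = g x + L v
  have hgx'eq : g x' = g x + L v := by
    rw [hgaff x', hgaff x, hv]
    have : L (x' - x) = L x' - L x := by rw [map_sub]
    rw [this]; ring
  rw [div_le_div_iff₀ hgx hgx', hgx'eq]
  nlinarith [hkey, mul_le_mul_of_nonneg_left hgi hgx.le]
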